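/- The number of alternating sign matrices ASM_n = Π_{i=0}^{n-1} (3i+1)!/(n+i)! forms a log-convex sequence: ASM_n^2 ≤ ASM_{n-1} · ASM_{n+1} for all n ≥ 1. -/

import Mathlib

open Finset

/-- The number of `n × n` alternating sign matrices,
`ASM_n = ∏_{i=0}^{n-1} (3i+1)!/(n+i)!`. -/
def asm (n : ℕ) : ℚ :=
  ∏ i ∈ range n, ((3 * i + 1).factorial : ℚ) / ((n + i).factorial : ℚ)

lemma asm_pos (n : ℕ) : 0 < asm n := by
  apply Finset.prod_pos
  intro i _
  positivity

/-- numerator product -/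
def asmN (n : ℕ) : ℚ := ∏ i ∈ range n, ((3 * i + 1).factorial : ℚ)

/-- denominator product -/
def asmD (n : ℕ) : ℚ := ∏ i ∈ Ico n (2 * n), ((i).factorial : ℚ)

lemma asmD_pos (n : ℕ) : 0 < asmD n := by
  apply Finset.prod_pos; intro i _; positivity

lemma asmN_pos (n : ℕ) : 0 < asmN n := by
  apply Finset.prod_pos; intro i _; positivity

lemma asm_eq (n : ℕ) : asm n = asmN n / asmD n := by
  rw [asm, asmN, asmD, Finset.prod_div_distrib, Finset.prod_Ico_eq_prod_range]
  have h : 2 * n - n = n := by omega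
  rw [h]

lemma asmD_succ (n : ℕ) (hn : 1 ≤ n) :
    asmD (n + 1) * (n.factorial : ℚ) =
      asmD n * ((2 * n).factorial : ℚ) * ((2 * n + 1).factorial : ℚ) := by
  have h1 : 2 * (n + 1) = (2 * n + 1) + 1 := by ring
  have h2 : 2 * n + 1 = (2 * n) + 1 := rfl
  rw [asmD, asmD, h1, Finset.prod_Ico_succ_top (by omega),
    Finset.prod_Ico_succ_top (by omega : n + 1 ≤ 2 * n),
    Finset.prod_eq_prod_Ico_succ_bot (by omega : n < 2 * n)]
  ring

lemma asm_succ (n : ℕ) : asm (n + 1) =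
    asm n * (((3 * n + 1).factorial : ℚ) * (n.factorial : ℚ) /
      (((2 * n).factorial : ℚ) * ((2 * n + 1).factorial : ℚ))) := by
  rcases Nat.eq_zero_or_pos n with h | h
  · subst h
    simp [asm, Nat.factorial]
  rw [asm_eq, asm_eq]
  have hN : asmN (n + 1) = asmN n * ((3 * n + 1).factorial : ℚ) :=
    Finset.prod_range_succ _ n
  have hD := asmD_succ n h
  have hD0 : asmD n ≠ 0 := (asmD_pos n).ne'
  have hD1 : asmD (n + 1) ≠ 0 := (asmD_pos (n + 1)).ne'
  have hf : (n.factorial : ℚ) ≠ 0 := by positivity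
  have h2f : ((2 * n).factorial : ℚ) ≠ 0 := by positivity
  have h2f1 : ((2 * n + 1).factorial : ℚ) ≠ 0 := by positivity
  rw [hN]
  field_simp
  linear_combination (-1 * asmN n) * hD

/-- the ratio ASM_{n+1}/ASM_n is increasing -/
lemma ratio_mono (n : ℕ) :
    ((3 * n + 1).factorial : ℚ) * (n.factorial : ℚ) /
      (((2 * n).factorial : ℚ) * ((2 * n + 1).factorial : ℚ)) ≤
    ((3 * (n + 1) + 1).factorial : ℚ) * ((n + 1).factorial : ℚ) /
      (((2 * (n + 1)).factorial : ℚ) * ((2 * (n + 1) + 1).factorial : ℚ)) := by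
  have e1 : (3 * (n + 1) + 1).factorial =
      (3 * n + 4) * ((3 * n + 3) * ((3 * n + 2) * (3 * n + 1).factorial)) := by
    have : 3 * (n + 1) + 1 = (3 * n + 3) + 1 := by ring
    rw [this, Nat.factorial_succ]
    have : 3 * n + 3 = (3 * n + 2) + 1 := by ring
    rw [this, Nat.factorial_succ]
    have : 3 * n + 2 = (3 * n + 1) + 1 := by ring
    rw [this, Nat.factorial_succ]
  have e2 : (n + 1).factorial = (n + 1) * n.factorial := Nat.factorial_succ n
  have e3 : (2 * (n + 1)).factorial =
      (2 * n + 2) * ((2 * n + 1) * (2 * n).factorial) := by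
    have : 2 * (n + 1) = (2 * n + 1) + 1 := by ring
    rw [this, Nat.factorial_succ, Nat.factorial_succ]
  have e4 : (2 * (n + 1) + 1).factorial =
      (2 * n + 3) * ((2 * n + 2) * (2 * n + 1).factorial) := by
    have : 2 * (n + 1) + 1 = (2 * n + 2) + 1 := by ring
    rw [this, Nat.factorial_succ]
    have : 2 * n + 2 = (2 * n + 1) + 1 := by ring
    rw [this, Nat.factorial_succ]
  rw [e1, e2, e3, e4]
  have hA : (0:ℚ) < ((3 * n + 1).factorial : ℚ) := by positivity
  have hB : (0:ℚ) < (n.factorial : ℚ) := by positivity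
  have hC : (0:ℚ) < ((2 * n).factorial : ℚ) := by positivity
  have hD : (0:ℚ) < ((2 * n + 1).factorial : ℚ) := by positivity
  rw [div_le_div_iff₀ (by positivity) (by positivity)]
  push_cast
  have key : ((2:ℚ) * n + 2) * (2 * n + 1) * ((2 * n + 3) * (2 * n + 2)) ≤
      (3 * n + 4) * (3 * n + 3) * (3 * n + 2) * (n + 1) := by
    have hn : (0:ℚ) ≤ (n:ℚ) := Nat.cast_nonneg n
    nlinarith [sq_nonneg ((n:ℚ)), hn, mul_nonneg hn hn, mul_nonneg (mul_nonneg hn hn) hn]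
  nlinarith [mul_pos (mul_pos hA hB) (mul_pos hC hD),
    mul_le_mul_of_nonneg_right key (le_of_lt (mul_pos (mul_pos hA hB) (mul_pos hC hD)))]

theorem asm_log_convex (n : ℕ) (hn : 1 ≤ n) :
    asm n ^ 2 ≤ asm (n - 1) * asm (n + 1) := by
  obtain ⟨m, rfl⟩ := Nat.exists_eq_add_of_le hn
  simp only [Nat.add_sub_cancel_left] at *
  have h1 := asm_succ m
  have h2 := asm_succ (m + 1)
  have hm : 0 < asm m := asm_pos m
  have hr : (0:ℚ) < ((3 * m + 1).factorial : ℚ) * (m.factorial : ℚ) /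
      (((2 * m).factorial : ℚ) * ((2 * m + 1).factorial : ℚ)) := by positivity
  have hmono := ratio_mono m
  rw [show 1 + m = m + 1 by ring] at *
  rw [h2, h1]
  set r1 := ((3 * m + 1).factorial : ℚ) * (m.factorial : ℚ) /
      (((2 * m).factorial : ℚ) * ((2 * m + 1).factorial : ℚ)) with hr1
  set r2 := ((3 * (m + 1) + 1).factorial : ℚ) * ((m + 1).factorial : ℚ) /
      (((2 * (m + 1)).factorial : ℚ) * ((2 * (m + 1) + 1).factorial : ℚ)) with hr2
  have : asm m * r1 * (asm m * r1) ≤ asm m * (asm m * r1 * r2) := by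
    nlinarith [mul_pos hm hr, mul_pos (mul_pos hm hm) hr]
  calc (asm m * r1) ^ 2 = asm m * r1 * (asm m * r1) := by ring
    _ ≤ asm m * (asm m * r1 * r2) := this
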